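/- Let p be an odd prime and l an integer with p ∤ l. Let n ≥ 1 and let (a_1,b_1),…,(a_n,b_n) be pairs of coprime integers such that for some 1 ≤ n_0 ≤ n: a_j = p·a'_j with p ∤ a'_j for 1 ≤ j ≤ n_0, and p ∤ a_j for j > n_0. Choose integers w_j with 4·l·a'_j·w_j ≡ 1 (mod p) for j ≤ n_0. Then Σ_{h ∈ ℤ/pℤ} Σ_{s=0}^{p−1} Π_{j=1}^{n} η_{h,s}(a_j,b_j) = S_p(−Σ_{j=1}^{n_0} b_j·w_j) · Π_{j=1}^{n_0} S_p(l·a'_j·b_j); consequently the Dijkgraaf–Witten invariant satisfies Z^{ω_l}(M_O(g;(a_1,b_1),…,(a_n,b_n))) = p^{2g−2}·S_p(−Σ_{j=1}^{n_0} b_j·w_j)·Π_{j=1}^{n_0} S_p(l·a'_j·b_j). -/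

import Mathlib

/-- `ζ_n = exp(2πi/n)`. -/
noncomputable def zetaC (n : ℕ) : ℂ := Complex.exp (2 * Real.pi * Complex.I / n)

/-- The Gauss-type sum `S_p(A) = Σ_{k=0}^{p−1} ζ_p^{A·k²}`. -/
noncomputable def SP (p : ℕ) (A : ℤ) : ℂ := ∑ k ∈ Finset.range p, zetaC p ^ (A * (k : ℤ) ^ 2)

/-- `η_{h,s}(a,b) = Σ_{z ∈ ℤ/pℤ, a·z = h} ζ_{p²}^{l·a·b·z̃² − (2·l·h̃ + p·s)·b·z̃}`. -/
noncomputable def etaP (p : ℕ) [NeZero p] (l : ℤ) (h : ZMod p) (s a b : ℤ) : ℂ :=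
  ∑ z : ZMod p,
    if a • z = h then
      zetaC (p ^ 2) ^
        (l * a * b * (z.val : ℤ) ^ 2 - (2 * l * (h.val : ℤ) + p * s) * b * (z.val : ℤ))
    else 0

lemma zetaC_ne_zero (n : ℕ) : zetaC n ≠ 0 := Complex.exp_ne_zero _

lemma zetaC_zpow (n : ℕ) (m : ℤ) :
    zetaC n ^ m = Complex.exp (2 * Real.pi * Complex.I * m / n) := by
  rw [zetaC, ← Complex.exp_int_mul]
  ring_nf

lemma zetaC_pow_self (n : ℕ) (hn : n ≠ 0) : zetaC n ^ (n : ℤ) = 1 := by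
  rw [zetaC_zpow]
  have : (2 * Real.pi * Complex.I * ((n : ℤ) : ℂ) / n : ℂ) = 2 * Real.pi * Complex.I := by
    have hp : (n : ℂ) ≠ 0 := Nat.cast_ne_zero.mpr hn
    push_cast
    field_simp
  rw [this, Complex.exp_two_pi_mul_I]

lemma zetaC_congr (p : ℕ) [NeZero p] {m m' : ℤ} (h : (m : ZMod p) = (m' : ZMod p)) :
    zetaC p ^ m = zetaC p ^ m' := by
  rw [ZMod.intCast_eq_intCast_iff] at h
  obtain ⟨k, hk⟩ := h.dvd
  have hk' : m = m' + (p : ℤ) * (-k) := by linarith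
  rw [hk', zpow_add₀ (zetaC_ne_zero p), zpow_mul, zetaC_pow_self p (NeZero.ne p), one_zpow,
    mul_one]

lemma zetaC_sq (p : ℕ) (hn : p ≠ 0) (m : ℤ) :
    zetaC (p ^ 2) ^ ((p : ℤ) * m) = zetaC p ^ m := by
  rw [zetaC_zpow, zetaC_zpow]
  congr 1
  have hp : (p : ℂ) ≠ 0 := Nat.cast_ne_zero.mpr hn
  push_cast
  field_simp

noncomputable def eChar (p : ℕ) [NeZero p] (x : ZMod p) : ℂ := zetaC p ^ (x.val : ℤ)

lemma eChar_intCast (p : ℕ) [NeZero p] (m : ℤ) : eChar p (m : ZMod p) = zetaC p ^ m := by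
  apply zetaC_congr
  push_cast [ZMod.natCast_val, ZMod.intCast_cast]
  simp [ZMod.intCast_zmod_cast]

lemma eChar_add (p : ℕ) [NeZero p] (x y : ZMod p) :
    eChar p (x + y) = eChar p x * eChar p y := by
  have hx : ((x.val : ℤ) : ZMod p) = x := by
    simp [ZMod.natCast_rightInverse x]
  have hy : ((y.val : ℤ) : ZMod p) = y := by
    simp [ZMod.natCast_rightInverse y]
  calc eChar p (x + y) = eChar p (((x.val : ℤ) + (y.val : ℤ) : ℤ) : ZMod p) := by
        rw [Int.cast_add, hx, hy]
    _ = zetaC p ^ ((x.val : ℤ) + (y.val : ℤ)) := eChar_intCast ..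
    _ = _ := zpow_add₀ (zetaC_ne_zero p) _ _

lemma eChar_zero (p : ℕ) [NeZero p] : eChar p 0 = 1 := by
  have : eChar p ((0 : ℤ) : ZMod p) = zetaC p ^ (0 : ℤ) := eChar_intCast p 0
  simpa using this

lemma eChar_sum (p : ℕ) [NeZero p] {ι : Type*} (S : Finset ι) (f : ι → ZMod p) :
    eChar p (∑ j ∈ S, f j) = ∏ j ∈ S, eChar p (f j) := by
  classical
  induction S using Finset.induction_on with
  | empty => simp [eChar_zero]
  | insert h ih => simp_all [eChar_add]

lemma sum_zmod_val (p : ℕ) [NeZero p] (f : ℕ → ℂ) :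
    ∑ z : ZMod p, f (z.val) = ∑ k ∈ Finset.range p, f k := by
  refine Finset.sum_nbij' (fun z => z.val) (fun k => (k : ZMod p)) ?_ ?_ ?_ ?_ ?_
  · intro z _; exact Finset.mem_range.mpr (ZMod.val_lt z)
  · intro k _; exact Finset.mem_univ _
  · intro z _; exact ZMod.natCast_rightInverse z
  · intro k hk; exact ZMod.val_natCast_of_lt (Finset.mem_range.mp hk)
  · intro z _; rfl

lemma sum_eChar_sq (p : ℕ) [NeZero p] (A : ℤ) :
    ∑ z : ZMod p, eChar p ((A : ZMod p) * z ^ 2) = SP p A := by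
  have : ∀ z : ZMod p, eChar p ((A : ZMod p) * z ^ 2) = zetaC p ^ (A * (z.val : ℤ) ^ 2) := by
    intro z
    rw [← eChar_intCast]
    congr 1
    have hz : ((z.val : ℕ) : ZMod p) = z := ZMod.natCast_rightInverse z
    push_cast [hz]
    ring
  rw [Finset.sum_congr rfl (fun z _ => this z)]
  exact sum_zmod_val p (fun k => zetaC p ^ (A * (k : ℤ) ^ 2))

lemma sum_shift (p : ℕ) [NeZero p] (F : ZMod p → ℂ) (t : ZMod p) :
    ∑ z : ZMod p, F (z - t) = ∑ z : ZMod p, F z :=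
  Fintype.sum_equiv (Equiv.subRight t) _ _ (fun _ => rfl)

lemma eta_vanish (p : ℕ) [NeZero p] (l a' b s : ℤ) (h : ZMod p) (hh : h ≠ 0) :
    etaP p l h s ((p : ℤ) * a') b = 0 := by
  unfold etaP
  apply Finset.sum_eq_zero
  intro z _
  rw [if_neg]
  intro hc
  apply hh
  rw [← hc, zsmul_eq_mul]
  push_cast
  simp

lemma eta_big (p : ℕ) [NeZero p] (hp : p.Prime) (l a b s : ℤ) (ha : ¬ (p : ℤ) ∣ a) :
    etaP p l 0 s a b = 1 := by
  haveI := Fact.mk hp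
  have hu : (a : ZMod p) ≠ 0 := fun h => ha ((ZMod.intCast_zmod_eq_zero_iff_dvd a p).mp h)
  have hcond : ∀ z : ZMod p, (a • z = (0 : ZMod p)) ↔ z = 0 := by
    intro z
    rw [zsmul_eq_mul]
    constructor
    · intro h
      rcases mul_eq_zero.mp h with h | h
      · exact absurd h hu
      · exact h
    · rintro rfl; ring
  unfold etaP
  rw [Finset.sum_congr rfl (fun z _ => by rw [if_congr (hcond z) rfl rfl])]
  rw [Finset.sum_ite_eq' Finset.univ (0 : ZMod p)]
  simp [ZMod.val_zero]

lemma eta_small (p : ℕ) [NeZero p] (l a' b w s : ℤ)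
    (hw : ((4 * l * a' * w : ℤ) : ZMod p) = 1) :
    etaP p l 0 s ((p : ℤ) * a') b
      = zetaC p ^ (-(b * w * s ^ 2)) * SP p (l * a' * b) := by
  have hcond : ∀ z : ZMod p, ((p : ℤ) * a') • z = (0 : ZMod p) := by
    intro z
    rw [zsmul_eq_mul]
    push_cast
    simp
  have hterm : ∀ z : ZMod p,
      zetaC (p ^ 2) ^
        (l * ((p : ℤ) * a') * b * (z.val : ℤ) ^ 2
          - (2 * l * (((0 : ZMod p).val : ℤ)) + p * s) * b * (z.val : ℤ))
      = eChar p (((l * a' * b : ℤ) : ZMod p) * z ^ 2 - ((s * b : ℤ) : ZMod p) * z) := by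
    intro z
    have hzv : ((z.val : ℕ) : ZMod p) = z := ZMod.natCast_rightInverse z
    have h0 : ((0 : ZMod p).val : ℤ) = 0 := by simp [ZMod.val_zero]
    rw [h0]
    have hexp : l * ((p : ℤ) * a') * b * (z.val : ℤ) ^ 2
        - (2 * l * 0 + p * s) * b * (z.val : ℤ)
        = (p : ℤ) * (l * a' * b * (z.val : ℤ) ^ 2 - s * b * (z.val : ℤ)) := by ring
    rw [hexp, zetaC_sq p (NeZero.ne p), ← eChar_intCast]
    congr 1
    push_cast [hzv]
    ring
  unfold etaP
  rw [Finset.sum_congr rfl (fun z _ => by rw [if_pos (hcond z), hterm z])]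
  set A : ZMod p := ((l * a' * b : ℤ) : ZMod p) with hA
  set t : ZMod p := ((2 * w * s : ℤ) : ZMod p) with ht
  set C : ZMod p := ((-(b * w * s ^ 2) : ℤ) : ZMod p) with hC
  have hsq : ∀ z : ZMod p, A * z ^ 2 - ((s * b : ℤ) : ZMod p) * z
      = A * (z - t) ^ 2 + C := by
    intro z
    have hw' : 4 * (l : ZMod p) * (a' : ZMod p) * (w : ZMod p) = 1 := by
      push_cast at hw; exact hw
    rw [hA, ht, hC]
    push_cast
    linear_combination ((b : ZMod p) * (s : ZMod p) * z - (b : ZMod p) * (w : ZMod p) * (s : ZMod p) ^ 2) * hw'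
  calc ∑ z : ZMod p, eChar p (A * z ^ 2 - ((s * b : ℤ) : ZMod p) * z)
      = ∑ z : ZMod p, eChar p (A * (z - t) ^ 2) * eChar p C := by
        refine Finset.sum_congr rfl (fun z _ => ?_)
        rw [hsq z, eChar_add]
    _ = (∑ z : ZMod p, eChar p (A * (z - t) ^ 2)) * eChar p C := by
        rw [Finset.sum_mul]
    _ = (∑ z : ZMod p, eChar p (A * z ^ 2)) * eChar p C := by
        rw [sum_shift p (fun z => eChar p (A * z ^ 2)) t]
    _ = SP p (l * a' * b) * eChar p C := by rw [sum_eChar_sq]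
    _ = zetaC p ^ (-(b * w * s ^ 2)) * SP p (l * a' * b) := by
        rw [hC, eChar_intCast]; ring

/- The pairs `(a_j, b_j)`, `1 ≤ j ≤ n`, of the paper are indexed here by `j ∈ range n`
(`0`-based, so paper's `j` is `j+1` here); `1 ≤ n_0 ≤ n`.
By the paper's Theorem 3.3, `p^(2g−2) · Σ_{h,s} Π_j η_{h,s}(a_j,b_j)` is the
Dijkgraaf–Witten invariant `Z^{ω_l}(M_O(g;(a_1,b_1),…,(a_n,b_n)))`, whence the second
conjunct states the "consequently" clause. -/
theorem statement19 (p : ℕ) [NeZero p] (hp : p.Prime) (hp2 : p ≠ 2) (l : ℤ)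
    (hl : ¬ (p : ℤ) ∣ l) (n n0 : ℕ) (hn : 1 ≤ n) (h1 : 1 ≤ n0) (h3 : n0 ≤ n)
    (a a' b w : ℕ → ℤ) (hcop : ∀ j < n, IsCoprime (a j) (b j))
    (hsmall : ∀ j < n0, a j = (p : ℤ) * a' j ∧ ¬ (p : ℤ) ∣ a' j)
    (hbig : ∀ j, n0 ≤ j → j < n → ¬ (p : ℤ) ∣ a j)
    (hw : ∀ j < n0, 4 * l * a' j * w j ≡ 1 [ZMOD (p : ℤ)]) (g : ℕ) :
    (∑ h : ZMod p, ∑ s ∈ Finset.range p, ∏ j ∈ Finset.range n, etaP p l h (s : ℤ) (a j) (b j)) =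
      SP p (-(∑ j ∈ Finset.range n0, b j * w j)) *
        (∏ j ∈ Finset.range n0, SP p (l * a' j * b j)) ∧
    (p : ℂ) ^ (2 * (g : ℤ) - 2) *
        (∑ h : ZMod p, ∑ s ∈ Finset.range p,
          ∏ j ∈ Finset.range n, etaP p l h (s : ℤ) (a j) (b j)) =
      (p : ℂ) ^ (2 * (g : ℤ) - 2) * SP p (-(∑ j ∈ Finset.range n0, b j * w j)) *
        (∏ j ∈ Finset.range n0, SP p (l * a' j * b j)) := by
  have hw' : ∀ j < n0, ((4 * l * a' j * w j : ℤ) : ZMod p) = 1 := by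
    intro j hj
    have h := (ZMod.intCast_eq_intCast_iff _ _ p).mpr (hw j hj)
    simpa using h
  have main : (∑ h : ZMod p, ∑ s ∈ Finset.range p,
        ∏ j ∈ Finset.range n, etaP p l h (s : ℤ) (a j) (b j)) =
      SP p (-(∑ j ∈ Finset.range n0, b j * w j)) *
        (∏ j ∈ Finset.range n0, SP p (l * a' j * b j)) := by
    have hvan : ∀ h : ZMod p, h ≠ 0 →
        (∑ s ∈ Finset.range p, ∏ j ∈ Finset.range n, etaP p l h (s : ℤ) (a j) (b j)) = 0 := by
      intro h hh
      apply Finset.sum_eq_zero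
      intro s _
      apply Finset.prod_eq_zero (Finset.mem_range.mpr (lt_of_lt_of_le h1 h3))
      rw [(hsmall 0 h1).1]
      exact eta_vanish p l (a' 0) (b 0) (s : ℤ) h hh
    rw [Fintype.sum_eq_single (0 : ZMod p) hvan]
    have hprod : ∀ s ∈ Finset.range p,
        (∏ j ∈ Finset.range n, etaP p l 0 (s : ℤ) (a j) (b j))
          = zetaC p ^ ((-(∑ j ∈ Finset.range n0, b j * w j)) * (s : ℤ) ^ 2) *
              ∏ j ∈ Finset.range n0, SP p (l * a' j * b j) := by
      intro s _
      rw [← Finset.prod_range_mul_prod_Ico _ h3]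
      have hbig1 : (∏ j ∈ Finset.Ico n0 n, etaP p l 0 (s : ℤ) (a j) (b j)) = 1 := by
        apply Finset.prod_eq_one
        intro j hj
        obtain ⟨hj1, hj2⟩ := Finset.mem_Ico.mp hj
        exact eta_big p hp l (a j) (b j) (s : ℤ) (hbig j hj1 hj2)
      rw [hbig1, mul_one]
      have hsmall1 : ∀ j ∈ Finset.range n0, etaP p l 0 (s : ℤ) (a j) (b j)
          = zetaC p ^ (-(b j * w j * (s : ℤ) ^ 2)) * SP p (l * a' j * b j) := by
        intro j hj
        have hj' := Finset.mem_range.mp hj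
        rw [(hsmall j hj').1]
        exact eta_small p l (a' j) (b j) (w j) (s : ℤ) (hw' j hj')
      rw [Finset.prod_congr rfl hsmall1, Finset.prod_mul_distrib]
      congr 1
      have h1' : ∀ j ∈ Finset.range n0, zetaC p ^ (-(b j * w j * (s : ℤ) ^ 2))
          = eChar p ((-(b j * w j * (s : ℤ) ^ 2) : ℤ) : ZMod p) :=
        fun j _ => (eChar_intCast p _).symm
      rw [Finset.prod_congr rfl h1', ← eChar_sum, ← eChar_intCast]
      congr 1
      push_cast
      rw [neg_mul, Finset.sum_mul, ← Finset.sum_neg_distrib]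
    rw [Finset.sum_congr rfl hprod, ← Finset.sum_mul]
    congr 1
  exact ⟨main, by rw [main]; ring⟩
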